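/- Let (X, Σ, μ) be a measure space with μ(X) < ∞. Let f, g : X → ℝ be μ-integrable functions that are μ-a.e. correlated, and suppose that f·g is μ-integrable. Then equality μ(X) · ∫_X f g dμ = (∫_X f dμ) · (∫_X g dμ) holds if and only if at least one of the two functions f, g is μ-a.e. equal to a constant. -/

import Mathlib

open MeasureTheory

/-- If every rational level set splits trivially, `f` is a.e. constant. -/
lemma aux_ae_const_of_levels {X : Type*} [MeasurableSpace X] (μ : Measure X) (f : X → ℝ)
    (h : ∀ q : ℚ, μ {x | f x < q} = 0 ∨ μ {x | (q : ℝ) < f x} = 0) :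
    ∃ c : ℝ, ∀ᵐ x ∂μ, f x = c := by
  by_cases hS : ∀ q : ℚ, μ {x | f x < (q : ℝ)} = 0
  · have huniv : μ Set.univ = 0 := by
      have he : (Set.univ : Set X) = ⋃ q : ℚ, {x | f x < (q : ℝ)} := by
        ext x
        simp only [Set.mem_univ, Set.mem_iUnion, Set.mem_setOf_eq, true_iff]
        exact_mod_cast exists_rat_gt (f x)
      rw [he]; exact measure_iUnion_null hS
    exact ⟨0, by rw [ae_iff]; exact measure_mono_null (Set.subset_univ _) huniv⟩
  by_cases hT : ∀ q : ℚ, μ {x | (q : ℝ) < f x} = 0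
  · have huniv : μ Set.univ = 0 := by
      have he : (Set.univ : Set X) = ⋃ q : ℚ, {x | (q : ℝ) < f x} := by
        ext x
        simp only [Set.mem_univ, Set.mem_iUnion, Set.mem_setOf_eq, true_iff]
        exact_mod_cast exists_rat_lt (f x)
      rw [he]; exact measure_iUnion_null hT
    exact ⟨0, by rw [ae_iff]; exact measure_mono_null (Set.subset_univ _) huniv⟩
  push_neg at hS hT
  obtain ⟨q₀, hq₀⟩ := hT
  obtain ⟨q₁, hq₁⟩ := hS
  set T : Set ℝ := {a | μ {x | f x < a} = 0} with hTdef
  have hq₀T : (q₀ : ℝ) ∈ T := (h q₀).resolve_right hq₀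
  have hub : ∀ a ∈ T, a ≤ (q₁ : ℝ) := by
    intro a ha
    by_contra hlt
    push_neg at hlt
    exact hq₁ (measure_mono_null (fun x hx => lt_trans hx hlt) ha)
  have hne : T.Nonempty := ⟨_, hq₀T⟩
  have hbdd : BddAbove T := ⟨(q₁ : ℝ), hub⟩
  set c := sSup T with hc
  refine ⟨c, ?_⟩
  have h1 : μ {x | f x < c} = 0 := by
    have hsub : {x | f x < c} ⊆ ⋃ q : ℚ, {x | f x < (q : ℝ) ∧ (q : ℝ) < c} := by
      intro x hx
      obtain ⟨a, haT, hxa⟩ := exists_lt_of_lt_csSup hne hx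
      obtain ⟨q, hq1, hq2⟩ := exists_rat_btwn hxa
      exact Set.mem_iUnion.2 ⟨q, hq1, lt_of_lt_of_le hq2 (le_csSup hbdd haT)⟩
    refine measure_mono_null hsub (measure_iUnion_null fun q => ?_)
    by_cases hqc : (q : ℝ) < c
    · obtain ⟨a, haT, hqa⟩ := exists_lt_of_lt_csSup hne hqc
      exact measure_mono_null (fun x hx => lt_trans hx.1 hqa) haT
    · have : {x | f x < (q : ℝ) ∧ (q : ℝ) < c} = ∅ := by
        ext x; simp only [Set.mem_setOf_eq, Set.mem_empty_iff_false, iff_false]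
        exact fun hx => hqc hx.2
      simp [this]
  have h2 : μ {x | c < f x} = 0 := by
    have hsub : {x | c < f x} ⊆ ⋃ q : ℚ, {x | (q : ℝ) < f x ∧ c < (q : ℝ)} := by
      intro x hx
      have hx' : c < f x := hx
      obtain ⟨q, hq1, hq2⟩ := exists_rat_btwn hx'
      exact Set.mem_iUnion.2 ⟨q, hq2, hq1⟩
    refine measure_mono_null hsub (measure_iUnion_null fun q => ?_)
    by_cases hqc : c < (q : ℝ)
    · have hqnT : μ {x | f x < (q : ℝ)} ≠ 0 := by
        intro hnull
        exact absurd (le_csSup hbdd (hTdef ▸ hnull)) (not_le.2 hqc)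
      exact measure_mono_null (fun x hx => hx.1) ((h q).resolve_left hqnT)
    · have : {x | (q : ℝ) < f x ∧ c < (q : ℝ)} = ∅ := by
        ext x; simp only [Set.mem_setOf_eq, Set.mem_empty_iff_false, iff_false]
        exact fun hx => hqc hx.2
      simp [this]
  rw [ae_iff]
  refine measure_mono_null (fun x hx => ?_) (measure_union_null h1 h2)
  rcases lt_or_gt_of_ne (hx : f x ≠ c) with hlt | hgt
  · exact Or.inl hlt
  · exact Or.inr hgt

/-- Choose a point of a non-null set satisfying an a.e. property. -/
lemma aux_exists_of_pos {X : Type*} [MeasurableSpace X] {μ : Measure X} {s : Set X}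
    (hs : μ s ≠ 0) {p : X → Prop} (hp : ∀ᵐ x ∂μ, p x) : ∃ x ∈ s, p x := by
  by_contra hcon
  push_neg at hcon
  exact hs (measure_mono_null (fun x hx => (hcon x hx : ¬ p x)) (ae_iff.1 hp))

/-- If a.e. pairs agree in `f` or in `g`, then `f` or `g` is a.e. constant. -/
lemma aux_ae_const_or {X : Type*} [MeasurableSpace X] (μ : Measure X) [SFinite μ]
    (f g : X → ℝ)
    (hP : ∀ᵐ p ∂(μ.prod μ), f p.1 = f p.2 ∨ g p.1 = g p.2) :
    (∃ c : ℝ, ∀ᵐ x ∂μ, f x = c) ∨ (∃ c : ℝ, ∀ᵐ x ∂μ, g x = c) := by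
  by_cases hfc : ∃ c : ℝ, ∀ᵐ x ∂μ, f x = c
  · exact Or.inl hfc
  right
  have hq : ∃ q : ℚ, μ {x | f x < (q : ℝ)} ≠ 0 ∧ μ {x | (q : ℝ) < f x} ≠ 0 := by
    by_contra hcon
    push_neg at hcon
    refine hfc (aux_ae_const_of_levels μ f fun q => ?_)
    by_cases h0 : μ {x | f x < (q : ℝ)} = 0
    · exact Or.inl h0
    · exact Or.inr (hcon q h0)
  obtain ⟨q, hA, hB⟩ := hq
  have hae : ∀ᵐ x ∂μ, ∀ᵐ y ∂μ, f x = f y ∨ g x = g y := MeasureTheory.Measure.ae_ae_of_ae_prod hP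
  obtain ⟨y₀, hy₀B, hy₀⟩ := aux_exists_of_pos hB hae
  obtain ⟨x₀, hx₀A, hx₀, hx₀y₀⟩ := aux_exists_of_pos hA (hae.and hy₀)
  have hfxy : f x₀ < f y₀ := lt_trans hx₀A hy₀B
  have hgc : g y₀ = g x₀ := hx₀y₀.resolve_left (ne_of_gt hfxy)
  refine ⟨g y₀, ?_⟩
  filter_upwards [hy₀, hx₀] with x h1 h2
  rcases h1 with h1 | h1
  · rcases h2 with h2 | h2
    · exact absurd (h1.trans h2.symm) (ne_of_gt hfxy)
    · rw [← h2]; exact hgc.symm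
  · exact h1.symm

/-- **Equality case of the Chebyshev-type inequality** (Theorem 3.1(1), equality part).
For a finite measure `μ` and `μ`-integrable, `μ`-a.e. correlated functions `f, g` with `f * g`
`μ`-integrable, equality `μ(X) ∫ f g dμ = (∫ f dμ)(∫ g dμ)` holds iff `f` or `g` is `μ`-a.e.
constant. -/
theorem stmt_1 {X : Type*} [MeasurableSpace X] (μ : Measure X)
    (hμ : μ Set.univ < ⊤)
    (f g : X → ℝ) (hf : Integrable f μ) (hg : Integrable g μ)
    (hfg : Integrable (fun x => f x * g x) μ)
    (hcorr : ∀ᵐ p ∂(μ.prod μ), 0 ≤ (f p.1 - f p.2) * (g p.1 - g p.2)) :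
    (μ Set.univ).toReal * ∫ x, f x * g x ∂μ = (∫ x, f x ∂μ) * (∫ x, g x ∂μ) ↔
      (∃ c : ℝ, ∀ᵐ x ∂μ, f x = c) ∨ (∃ c : ℝ, ∀ᵐ x ∂μ, g x = c) := by
  have hfin : IsFiniteMeasure μ := ⟨hμ⟩
  set M : ℝ := (μ Set.univ).toReal with hM
  -- integrability of the four pieces
  have i1 : Integrable (fun p : X × X => f p.1 * g p.1 * 1) (μ.prod μ) :=
    hfg.mul_prod (integrable_const (1 : ℝ))
  have i2 : Integrable (fun p : X × X => f p.1 * g p.2) (μ.prod μ) := hf.mul_prod hg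
  have i3 : Integrable (fun p : X × X => g p.1 * f p.2) (μ.prod μ) := hg.mul_prod hf
  have i4 : Integrable (fun p : X × X => (1 : ℝ) * (f p.2 * g p.2)) (μ.prod μ) :=
    (integrable_const (1 : ℝ)).mul_prod hfg
  have hfun : (fun p : X × X => (f p.1 - f p.2) * (g p.1 - g p.2)) =
      fun p : X × X => (f p.1 * g p.1 * 1 - f p.1 * g p.2) - g p.1 * f p.2
        + (1 : ℝ) * (f p.2 * g p.2) := by
    funext p; ring
  have hint : Integrable (fun p : X × X => (f p.1 - f p.2) * (g p.1 - g p.2)) (μ.prod μ) := by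
    rw [hfun]; exact ((i1.sub i2).sub i3).add i4
  have hone : (∫ x, (1 : ℝ) ∂μ) = M := by simp [hM, measureReal_def]
  have i12 : Integrable (fun p : X × X => f p.1 * g p.1 * 1 - f p.1 * g p.2) (μ.prod μ) :=
    i1.sub i2
  have i123 : Integrable
      (fun p : X × X => f p.1 * g p.1 * 1 - f p.1 * g p.2 - g p.1 * f p.2) (μ.prod μ) :=
    i12.sub i3
  have hI : (∫ p, (f p.1 - f p.2) * (g p.1 - g p.2) ∂(μ.prod μ)) =
      2 * (M * ∫ x, f x * g x ∂μ - (∫ x, f x ∂μ) * ∫ x, g x ∂μ) := by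
    rw [hfun, integral_add i123 i4, integral_sub i12 i3, integral_sub i1 i2]
    rw [integral_prod_mul (fun x => f x * g x) (fun _ => (1 : ℝ)),
      integral_prod_mul f g, integral_prod_mul g f,
      integral_prod_mul (fun _ => (1 : ℝ)) (fun x => f x * g x), hone]
    ring
  constructor
  · intro heq
    have hI0 : (∫ p, (f p.1 - f p.2) * (g p.1 - g p.2) ∂(μ.prod μ)) = 0 := by
      rw [hI, heq]; ring
    have hzero : (fun p : X × X => (f p.1 - f p.2) * (g p.1 - g p.2)) =ᵐ[μ.prod μ] 0 :=
      (integral_eq_zero_iff_of_nonneg_ae hcorr hint).1 hI0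
    have hP : ∀ᵐ p ∂(μ.prod μ), f p.1 = f p.2 ∨ g p.1 = g p.2 := by
      filter_upwards [hzero] with p hp
      rcases mul_eq_zero.1 hp with h | h
      · exact Or.inl (sub_eq_zero.1 h)
      · exact Or.inr (sub_eq_zero.1 h)
    exact aux_ae_const_or μ f g hP
  · rintro (⟨c, hc⟩ | ⟨c, hc⟩)
    · have e1 : (∫ x, f x * g x ∂μ) = c * ∫ x, g x ∂μ := by
        rw [← integral_const_mul]
        refine integral_congr_ae ?_
        filter_upwards [hc] with x hx
        rw [hx]
      have e2 : (∫ x, f x ∂μ) = M * c := by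
        rw [integral_congr_ae (g := fun _ => c) (by filter_upwards [hc] with x hx using hx)]
        simp [hM, mul_comm, measureReal_def]
      rw [e1, e2]; ring
    · have e1 : (∫ x, f x * g x ∂μ) = (∫ x, f x ∂μ) * c := by
        rw [← integral_mul_const]
        refine integral_congr_ae ?_
        filter_upwards [hc] with x hx
        rw [hx]
      have e2 : (∫ x, g x ∂μ) = M * c := by
        rw [integral_congr_ae (g := fun _ => c) (by filter_upwards [hc] with x hx using hx)]
        simp [hM, mul_comm, measureReal_def]
      rw [e1, e2]; ring
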